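/- Let S = ℂ[x_0,…,x_{n+1}] and S' = ℂ[x_0',…,x_{n+1}'] be graded polynomial rings with positive weights a_0,…,a_{n+1} and a_0',…,a_{n+1}', and let f ∈ S, f' ∈ S' be nonzero weighted-homogeneous polynomials of degrees d and d' with d > a_i for all i and d' > a_i' for all i. If there exists a graded ℂ-algebra isomorphism ψ : S/(f) → S'/(f'), then the multiset {a_0,…,a_{n+1}} equals the multiset {a_0',…,a_{n+1}'}, d = d', and ψ lifts to a graded ℂ-algebra isomorphism Ψ : S → S' satisfying Ψ(f) = c·f' for some c ∈ ℂ^× and inducing ψ on the quotients. -/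

import Mathlib

open MvPolynomial

noncomputable section

section S4Helpers

variable {σ : Type*}

lemma S4.weight_single (a : σ → ℕ) (j : σ) :
    Finsupp.weight a (Finsupp.single j 1) = a j := by
  simp [Finsupp.weight_apply, Finsupp.sum_single_index]

lemma S4.weight_pos {a : σ → ℕ} (ha : ∀ i, 0 < a i) {e : σ →₀ ℕ} (he : e ≠ 0) :
    0 < Finsupp.weight a e := by
  obtain ⟨j, hj⟩ := Finsupp.ne_iff.mp he
  simp only [Finsupp.coe_zero, Pi.zero_apply] at hj
  calc 0 < a j := ha j
    _ ≤ _ := Finsupp.le_weight_of_ne_zero' a hj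

lemma S4.span_homog {a : σ → ℕ} {f h : MvPolynomial σ ℂ} {d e : ℕ}
    (hf : f.IsWeightedHomogeneous a d) (hh : h.IsWeightedHomogeneous a e)
    (hmem : h ∈ Ideal.span {f}) (hne : h ≠ 0) :
    d ≤ e ∧ ∃ g : MvPolynomial σ ℂ, g.IsWeightedHomogeneous a (e - d) ∧ h = g * f := by
  classical
  obtain ⟨g, hg⟩ := Ideal.mem_span_singleton'.mp hmem
  have hde : d ≤ e := by
    obtain ⟨u, hu⟩ := ne_zero_iff.mp hne
    have hwu : Finsupp.weight a u = e := hh hu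
    rw [← hg, coeff_mul] at hu
    obtain ⟨vw, hvwmem, hvw⟩ := Finset.exists_ne_zero_of_sum_ne_zero hu
    have h2 : Finsupp.weight a vw.2 = d := hf (right_ne_zero_of_mul hvw)
    have hsum : vw.1 + vw.2 = u := Finset.HasAntidiagonal.mem_antidiagonal.mp hvwmem
    have : Finsupp.weight a vw.1 + Finsupp.weight a vw.2 = e := by
      rw [← map_add, hsum, hwu]
    omega
  refine ⟨hde, weightedHomogeneousComponent a (e - d) g,
    weightedHomogeneousComponent_isWeightedHomogeneous (e-d) g, ?_⟩
  ext u
  by_cases hu : Finsupp.weight a u = e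
  · rw [← hg, coeff_mul, coeff_mul]
    refine Finset.sum_congr rfl fun vw hvw => ?_
    by_cases h2 : coeff vw.2 f = 0
    · rw [h2, mul_zero, mul_zero]
    have hw2 : Finsupp.weight a vw.2 = d := hf h2
    have hv1 : Finsupp.weight a vw.1 = e - d := by
      have : Finsupp.weight a vw.1 + Finsupp.weight a vw.2 = e := by
        rw [← map_add, Finset.HasAntidiagonal.mem_antidiagonal.mp hvw, hu]
      omega
    rw [coeff_weightedHomogeneousComponent, if_pos hv1]
  · have h0 : coeff u h = 0 := by
      by_contra hc; exact hu (hh hc)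
    rw [h0, coeff_mul]
    symm
    refine Finset.sum_eq_zero fun vw hvw => ?_
    by_contra hne'
    have h1 : Finsupp.weight a vw.1 = e - d :=
      weightedHomogeneousComponent_isWeightedHomogeneous (e - d) g
        (left_ne_zero_of_mul hne')
    have h2 : Finsupp.weight a vw.2 = d := hf (right_ne_zero_of_mul hne')
    have : Finsupp.weight a vw.1 + Finsupp.weight a vw.2 = Finsupp.weight a u := by
      rw [← map_add, Finset.HasAntidiagonal.mem_antidiagonal.mp hvw]
    omega

lemma S4.piece_zero {a : σ → ℕ} {f : MvPolynomial σ ℂ} {d m : ℕ}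
    (hf : f.IsWeightedHomogeneous a d) (hm : m < d) {p : MvPolynomial σ ℂ}
    (hp : p.IsWeightedHomogeneous a m) (hmem : p ∈ Ideal.span {f}) : p = 0 := by
  by_contra hne
  exact absurd (S4.span_homog hf hp hmem hne).1 (by omega)

lemma S4.WH_pow {a : σ → ℕ} {p : MvPolynomial σ ℂ} {m : ℕ}
    (h : p.IsWeightedHomogeneous a m) (k : ℕ) :
    (p ^ k).IsWeightedHomogeneous a (k * m) := by
  induction k with
  | zero => simpa using isWeightedHomogeneous_one ℂ a
  | succ k ih =>
    rw [pow_succ, Nat.succ_mul]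
    exact ih.mul h

lemma S4.aeval_WH {a b : σ → ℕ} {v : σ → MvPolynomial σ ℂ}
    (hv : ∀ i, (v i).IsWeightedHomogeneous b (a i)) {p : MvPolynomial σ ℂ} {m : ℕ}
    (hp : p.IsWeightedHomogeneous a m) :
    (aeval v p).IsWeightedHomogeneous b m := by
  have hsum : aeval v p = ∑ e ∈ p.support, aeval v (monomial e (coeff e p)) := by
    conv_lhs => rw [p.as_sum]
    rw [map_sum]
  rw [hsum]
  refine IsWeightedHomogeneous.sum _ _ _ fun e he => ?_
  have hw : Finsupp.weight a e = m := hp (mem_support_iff.mp he)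
  rw [aeval_monomial]
  have h1 : IsWeightedHomogeneous b (algebraMap ℂ (MvPolynomial σ ℂ) (coeff e p)) 0 :=
    isWeightedHomogeneous_C b _
  have h2 : IsWeightedHomogeneous b (e.prod fun i k => v i ^ k)
      (∑ i ∈ e.support, e i * a i) := by
    rw [Finsupp.prod]
    exact IsWeightedHomogeneous.prod _ _ _ fun i _ => S4.WH_pow (hv i) (e i)
  have := h1.mul h2
  rw [zero_add] at this
  convert this using 1
  rw [← hw, Finsupp.weight_apply, Finsupp.sum]
  simp [mul_comm]

lemma S4.WH_zero_isC {a : σ → ℕ} (ha : ∀ i, 0 < a i) {p : MvPolynomial σ ℂ}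
    (hp : p.IsWeightedHomogeneous a 0) : p = C (coeff 0 p) := by
  classical
  haveI : Finsupp.NonTorsionWeight ℕ a := Finsupp.nonTorsionWeight_of ℕ (w := a) (fun i => (ha i).ne')
  ext u
  by_cases hu : u = 0
  · subst hu; simp
  · rw [coeff_C, if_neg (Ne.symm hu)]
    by_contra hc
    exact hu ((Finsupp.weight_eq_zero_iff_eq_zero a).mp (hp hc))

/-- Generators: products of two positively-graded homogeneous elements, together with
homogeneous elements of degree `≠ m`. -/
def S4.genSet (a : σ → ℕ) (m : ℕ) : Set (MvPolynomial σ ℂ) :=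
  {r | ∃ j k p q, 0 < j ∧ 0 < k ∧ IsWeightedHomogeneous a p j ∧
      IsWeightedHomogeneous a q k ∧ r = p * q}
  ∪ {p | ∃ k, k ≠ m ∧ IsWeightedHomogeneous a p k}

def S4.DD (a : σ → ℕ) (m : ℕ) : Submodule ℂ (MvPolynomial σ ℂ) :=
  Submodule.span ℂ (S4.genSet a m)

lemma S4.degree_add (u v : σ →₀ ℕ) :
    Finsupp.degree (u + v) = Finsupp.degree u + Finsupp.degree v := by
  rw [Finsupp.degree_eq_weight_one, map_add]

lemma S4.coeff_single_eq_zero {a : σ → ℕ} {m : ℕ} {j : σ} (hj : a j = m)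
    {r : MvPolynomial σ ℂ} (hr : r ∈ S4.DD a m) : coeff (Finsupp.single j 1) r = 0 := by
  classical
  have : S4.DD a m ≤ LinearMap.ker (lcoeff ℂ (Finsupp.single j 1)) := by
    rw [S4.DD, Submodule.span_le]
    rintro r (⟨jj, k, p, q, hjj, hk, hp, hq, rfl⟩ | ⟨k, hk, hp⟩)
    · simp only [SetLike.mem_coe, LinearMap.mem_ker, lcoeff_apply, coeff_mul]
      refine Finset.sum_eq_zero fun uv hu => ?_
      have hsum := Finset.HasAntidiagonal.mem_antidiagonal.mp hu
      by_contra hne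
      have h1 : coeff uv.1 p ≠ 0 := left_ne_zero_of_mul hne
      have h2 : coeff uv.2 q ≠ 0 := right_ne_zero_of_mul hne
      have hu1 : uv.1 ≠ 0 := by
        rintro h0
        have := hp h1
        rw [h0, map_zero] at this
        omega
      have hu2 : uv.2 ≠ 0 := by
        rintro h0
        have := hq h2
        rw [h0, map_zero] at this
        omega
      have hdd : Finsupp.degree uv.1 + Finsupp.degree uv.2 = 1 := by
        rw [← S4.degree_add, hsum]
        exact Finsupp.degree_single _ _
      have d1 : Finsupp.degree uv.1 ≠ 0 := fun h =>
        hu1 ((Finsupp.degree_eq_zero_iff _).mp h)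
      have d2 : Finsupp.degree uv.2 ≠ 0 := fun h =>
        hu2 ((Finsupp.degree_eq_zero_iff _).mp h)
      omega
    · simp only [SetLike.mem_coe, LinearMap.mem_ker, lcoeff_apply]
      by_contra hc
      have := hp hc
      rw [S4.weight_single] at this
      exact hk (by omega)
  exact this hr

lemma S4.finrank_DD [Fintype σ] [DecidableEq σ] (a : σ → ℕ) (ha : ∀ i, 0 < a i)
    (m : ℕ) (hm : 0 < m) :
    Module.finrank ℂ (MvPolynomial σ ℂ ⧸ S4.DD a m) = Fintype.card {i // a i = m} := by
  classical
  set D := S4.DD a m with hD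
  set v : {i // a i = m} → (MvPolynomial σ ℂ ⧸ D) :=
    fun i => Submodule.Quotient.mk (X i.1) with hv
  have hind : LinearIndependent ℂ v := by
    rw [Fintype.linearIndependent_iff]
    intro g hg i
    have hmk : D.mkQ (∑ k : {i // a i = m}, g k • (X k.1 : MvPolynomial σ ℂ)) = 0 := by
      rw [map_sum]
      simp only [map_smul, Submodule.mkQ_apply]
      exact hg
    rw [Submodule.mkQ_apply, Submodule.Quotient.mk_eq_zero] at hmk
    have hco := S4.coeff_single_eq_zero i.2 hmk
    rw [coeff_sum] at hco
    have heach : ∀ k : {i // a i = m},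
        coeff (Finsupp.single i.1 1) (g k • (X k.1 : MvPolynomial σ ℂ)) =
          if k = i then g k else 0 := by
      intro k
      rw [coeff_smul, MvPolynomial.X, coeff_monomial]
      by_cases hk : k = i
      · subst hk; simp
      · rw [if_neg, if_neg hk, smul_zero]
        intro heq
        exact hk (Subtype.ext ((Finsupp.single_left_inj one_ne_zero).mp heq))
    rw [Finset.sum_congr rfl fun k _ => heach k] at hco
    simpa using hco
  have hspan : ⊤ ≤ Submodule.span ℂ (Set.range v) := by
    rintro x -
    obtain ⟨p, rfl⟩ := Submodule.Quotient.mk_surjective D x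
    have hmon : ∀ (e : σ →₀ ℕ) (c : ℂ),
        (Submodule.Quotient.mk (monomial e c) : MvPolynomial σ ℂ ⧸ D) ∈
          Submodule.span ℂ (Set.range v) := by
      intro e c
      by_cases hw : Finsupp.weight a e = m
      · by_cases hsingle : ∃ i, e = Finsupp.single i 1
        · obtain ⟨i, rfl⟩ := hsingle
          have hai : a i = m := by rwa [S4.weight_single] at hw
          have hmx : (monomial (Finsupp.single i 1) c : MvPolynomial σ ℂ) = c • X i := by
            rw [MvPolynomial.X, smul_monomial, smul_eq_mul, mul_one]
          rw [hmx, Submodule.Quotient.mk_smul]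
          exact Submodule.smul_mem _ _ (Submodule.subset_span ⟨⟨i, hai⟩, rfl⟩)
        · have he0 : e ≠ 0 := by
            rintro rfl
            rw [map_zero] at hw
            omega
          obtain ⟨i, hi⟩ := Finsupp.support_nonempty_iff.mpr he0
          have hi' : e i ≠ 0 := Finsupp.mem_support_iff.mp hi
          set e' := e - Finsupp.single i 1 with he'
          have hee : Finsupp.single i 1 + e' = e := by
            rw [he', add_tsub_cancel_of_le]
            rw [Finsupp.single_le_iff]
            omega
          have he'0 : e' ≠ 0 := by
            intro h0
            exact hsingle ⟨i, by rw [← hee, h0, add_zero]⟩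
          have hprod : (monomial e c : MvPolynomial σ ℂ) = X i * monomial e' c := by
            rw [MvPolynomial.X, monomial_mul, one_mul, hee]
          have hmemD : (monomial e c : MvPolynomial σ ℂ) ∈ D := by
            apply Submodule.subset_span
            left
            exact ⟨a i, Finsupp.weight a e', X i, monomial e' c, ha i,
              S4.weight_pos ha he'0, isWeightedHomogeneous_X ℂ a i,
              isWeightedHomogeneous_monomial a e' c rfl, hprod⟩
          rw [(Submodule.Quotient.mk_eq_zero D).mpr hmemD]
          exact Submodule.zero_mem _
      · have hmemD : (monomial e c : MvPolynomial σ ℂ) ∈ D := by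
          apply Submodule.subset_span
          right
          exact ⟨Finsupp.weight a e, hw, isWeightedHomogeneous_monomial a e c rfl⟩
        rw [(Submodule.Quotient.mk_eq_zero D).mpr hmemD]
        exact Submodule.zero_mem _
    have hps : (Submodule.Quotient.mk p : MvPolynomial σ ℂ ⧸ D) =
        ∑ e ∈ p.support, Submodule.Quotient.mk (monomial e (coeff e p)) := by
      conv_lhs => rw [p.as_sum]
      exact map_sum D.mkQ _ _
    rw [hps]
    exact Submodule.sum_mem _ fun e _ => hmon e _
  rw [Module.finrank_eq_card_basis (Module.Basis.mk hind hspan)]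

lemma S4.map_DD_le (a a' : σ → ℕ) (m : ℕ)
    (Ψ : MvPolynomial σ ℂ ≃ₐ[ℂ] MvPolynomial σ ℂ)
    (hgr : ∀ k, (weightedHomogeneousSubmodule ℂ a k).map Ψ.toLinearMap
      = weightedHomogeneousSubmodule ℂ a' k) :
    (S4.DD a m).map Ψ.toLinearMap ≤ S4.DD a' m := by
  have hWH : ∀ k (p : MvPolynomial σ ℂ), IsWeightedHomogeneous a p k →
      IsWeightedHomogeneous a' (Ψ p) k := by
    intro k p hp
    have : Ψ.toLinearMap p ∈ (weightedHomogeneousSubmodule ℂ a k).map Ψ.toLinearMap :=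
      Submodule.mem_map_of_mem hp
    rw [hgr k, mem_weightedHomogeneousSubmodule] at this
    exact this
  rw [S4.DD, Submodule.map_span, Submodule.span_le]
  rintro _ ⟨r, hr, rfl⟩
  apply Submodule.subset_span
  rcases hr with ⟨j, k, p, q, hj, hk, hp, hq, rfl⟩ | ⟨k, hk, hp⟩
  · exact Or.inl ⟨j, k, Ψ p, Ψ q, hj, hk, hWH j p hp, hWH k q hq, by simp⟩
  · exact Or.inr ⟨k, hk, hWH k _ hp⟩

lemma S4.hgr_symm (a a' : σ → ℕ)
    (Ψ : MvPolynomial σ ℂ ≃ₐ[ℂ] MvPolynomial σ ℂ)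
    (hgr : ∀ k, (weightedHomogeneousSubmodule ℂ a k).map Ψ.toLinearMap
      = weightedHomogeneousSubmodule ℂ a' k) :
    ∀ k, (weightedHomogeneousSubmodule ℂ a' k).map Ψ.symm.toLinearMap
      = weightedHomogeneousSubmodule ℂ a k := by
  intro k
  rw [← hgr k, ← Submodule.map_comp]
  convert Submodule.map_id _
  ext x
  simp

lemma S4.map_DD (a a' : σ → ℕ) (m : ℕ)
    (Ψ : MvPolynomial σ ℂ ≃ₐ[ℂ] MvPolynomial σ ℂ)
    (hgr : ∀ k, (weightedHomogeneousSubmodule ℂ a k).map Ψ.toLinearMap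
      = weightedHomogeneousSubmodule ℂ a' k) :
    (S4.DD a m).map Ψ.toLinearMap = S4.DD a' m := by
  refine le_antisymm (S4.map_DD_le a a' m Ψ hgr) ?_
  intro x hx
  have hsymm : Ψ.symm.toLinearMap x ∈ S4.DD a m :=
    S4.map_DD_le a' a m Ψ.symm (S4.hgr_symm a a' Ψ hgr) (Submodule.mem_map_of_mem hx)
  exact ⟨Ψ.symm x, hsymm, by simp⟩

lemma S4.count_eq [Fintype σ] [DecidableEq σ] (a a' : σ → ℕ)
    (ha : ∀ i, 0 < a i) (ha' : ∀ i, 0 < a' i)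
    (Ψ : MvPolynomial σ ℂ ≃ₐ[ℂ] MvPolynomial σ ℂ)
    (hgr : ∀ k, (weightedHomogeneousSubmodule ℂ a k).map Ψ.toLinearMap
      = weightedHomogeneousSubmodule ℂ a' k)
    (m : ℕ) (hm : 0 < m) :
    Fintype.card {i // a i = m} = Fintype.card {i // a' i = m} := by
  have e := Submodule.Quotient.equiv (S4.DD a m) (S4.DD a' m) Ψ.toLinearEquiv
    (S4.map_DD a a' m Ψ hgr)
  rw [← S4.finrank_DD a ha m hm, ← S4.finrank_DD a' ha' m hm]
  exact e.finrank_eq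

end S4Helpers

/-- The `m`-th graded piece of the quotient `S/(f)`: the image of the submodule of
weighted-homogeneous polynomials of weighted degree `m` under the quotient map. -/
def quotPieces {n : ℕ} (a : Fin (n + 2) → ℕ) (f : MvPolynomial (Fin (n + 2)) ℂ) :
    ℕ → Submodule ℂ (MvPolynomial (Fin (n + 2)) ℂ ⧸ Ideal.span {f}) := fun m =>
  (weightedHomogeneousSubmodule ℂ a m).map
    (Ideal.Quotient.mkₐ ℂ (Ideal.span {f})).toLinearMap

/-- A graded isomorphism `S/(f) ≃ S'/(f')` between quotients of weighted
polynomial rings by nonzero weighted-homogeneous elements of degrees exceeding all the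
weights forces the weights to agree as multisets and the degrees to be equal, and it lifts
to a graded isomorphism `Ψ : S ≃ S'` with `Ψ(f) = c·f'` inducing `ψ` on the quotients. -/
theorem graded_iso_of_quotients_lifts {n : ℕ} (a a' : Fin (n + 2) → ℕ)
    (ha : ∀ i, 0 < a i) (ha' : ∀ i, 0 < a' i) (d d' : ℕ)
    (f f' : MvPolynomial (Fin (n + 2)) ℂ) (hf0 : f ≠ 0) (hf0' : f' ≠ 0)
    (hfh : f.IsWeightedHomogeneous a d) (hfh' : f'.IsWeightedHomogeneous a' d')
    (hd : ∀ i, a i < d) (hd' : ∀ i, a' i < d')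
    (ψ : (MvPolynomial (Fin (n + 2)) ℂ ⧸ Ideal.span {f}) ≃ₐ[ℂ]
      (MvPolynomial (Fin (n + 2)) ℂ ⧸ Ideal.span {f'}))
    (hψ : ∀ m, (quotPieces a f m).map ψ.toLinearMap = quotPieces a' f' m) :
    Finset.univ.val.map a = Finset.univ.val.map a' ∧ d = d' ∧
    ∃ Ψ : MvPolynomial (Fin (n + 2)) ℂ ≃ₐ[ℂ] MvPolynomial (Fin (n + 2)) ℂ,
      (∀ m, (weightedHomogeneousSubmodule ℂ a m).map Ψ.toLinearMap
        = weightedHomogeneousSubmodule ℂ a' m) ∧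
      (∃ c : ℂˣ, Ψ f = (c : ℂ) • f') ∧
      ∀ s : MvPolynomial (Fin (n + 2)) ℂ,
        ψ (Ideal.Quotient.mk (Ideal.span {f}) s) = Ideal.Quotient.mk (Ideal.span {f'}) (Ψ s) := by
  classical
  -- lifts of the images of the variables
  have hy : ∀ i : Fin (n + 2), ∃ yy : MvPolynomial (Fin (n + 2)) ℂ,
      yy.IsWeightedHomogeneous a' (a i) ∧
      Ideal.Quotient.mk (Ideal.span {f'}) yy = ψ (Ideal.Quotient.mk (Ideal.span {f}) (X i)) := by
    intro i
    have hx : ψ (Ideal.Quotient.mk (Ideal.span {f}) (X i)) ∈ quotPieces a' f' (a i) := by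
      rw [← hψ (a i)]
      refine Submodule.mem_map_of_mem ?_
      exact ⟨X i, isWeightedHomogeneous_X ℂ a i, rfl⟩
    obtain ⟨yy, h1, h2⟩ := hx
    exact ⟨yy, h1, h2⟩
  have hz : ∀ i : Fin (n + 2), ∃ zz : MvPolynomial (Fin (n + 2)) ℂ,
      zz.IsWeightedHomogeneous a (a' i) ∧
      Ideal.Quotient.mk (Ideal.span {f}) zz
        = ψ.symm (Ideal.Quotient.mk (Ideal.span {f'}) (X i)) := by
    intro i
    have hx : Ideal.Quotient.mk (Ideal.span {f'}) (X i) ∈ quotPieces a' f' (a' i) :=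
      ⟨X i, isWeightedHomogeneous_X ℂ a' i, rfl⟩
    rw [← hψ (a' i)] at hx
    obtain ⟨u, hu, huψ⟩ := hx
    obtain ⟨zz, hz1, hz2⟩ := hu
    refine ⟨zz, hz1, ?_⟩
    have hz2' : Ideal.Quotient.mk (Ideal.span {f}) zz = u := hz2
    rw [hz2', ← huψ]
    simp
  choose y hy1 hy2 using hy
  choose z hz1 hz2 using hz
  set Ψ₀ : MvPolynomial (Fin (n + 2)) ℂ →ₐ[ℂ] MvPolynomial (Fin (n + 2)) ℂ := aeval y with hΨ₀
  set Φ₀ : MvPolynomial (Fin (n + 2)) ℂ →ₐ[ℂ] MvPolynomial (Fin (n + 2)) ℂ := aeval z with hΦ₀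
  have hcomm : ∀ s, Ideal.Quotient.mk (Ideal.span {f'}) (Ψ₀ s)
      = ψ (Ideal.Quotient.mk (Ideal.span {f}) s) := by
    have : (Ideal.Quotient.mkₐ ℂ (Ideal.span {f'})).comp Ψ₀
        = ψ.toAlgHom.comp (Ideal.Quotient.mkₐ ℂ (Ideal.span {f})) := by
      apply MvPolynomial.algHom_ext
      intro i
      simp [hΨ₀, hy2 i]
    intro s
    have h := DFunLike.congr_fun this s
    simpa using h
  have hcomm' : ∀ s, Ideal.Quotient.mk (Ideal.span {f}) (Φ₀ s)
      = ψ.symm (Ideal.Quotient.mk (Ideal.span {f'}) s) := by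
    have : (Ideal.Quotient.mkₐ ℂ (Ideal.span {f})).comp Φ₀
        = ψ.symm.toAlgHom.comp (Ideal.Quotient.mkₐ ℂ (Ideal.span {f'})) := by
      apply MvPolynomial.algHom_ext
      intro i
      simp [hΦ₀, hz2 i]
    intro s
    have h := DFunLike.congr_fun this s
    simpa using h
  have hWHy : ∀ (k : ℕ) (p : MvPolynomial (Fin (n + 2)) ℂ),
      IsWeightedHomogeneous a p k → IsWeightedHomogeneous a' (Ψ₀ p) k :=
    fun k p hp => S4.aeval_WH hy1 hp
  have hWHz : ∀ (k : ℕ) (p : MvPolynomial (Fin (n + 2)) ℂ),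
      IsWeightedHomogeneous a' p k → IsWeightedHomogeneous a (Φ₀ p) k :=
    fun k p hp => S4.aeval_WH hz1 hp
  have hΦΨ : Φ₀.comp Ψ₀ = AlgHom.id ℂ _ := by
    apply MvPolynomial.algHom_ext
    intro i
    simp only [AlgHom.comp_apply, AlgHom.id_apply]
    have h1 : Φ₀ (Ψ₀ (X i)) - X i ∈ Ideal.span {f} := by
      rw [← Ideal.Quotient.eq]
      rw [hcomm' (Ψ₀ (X i)), hcomm (X i)]
      simp
    have h2 : IsWeightedHomogeneous a (Φ₀ (Ψ₀ (X i)) - X i) (a i) := by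
      have hmem : Φ₀ (Ψ₀ (X i)) - X i ∈ weightedHomogeneousSubmodule ℂ a (a i) :=
        Submodule.sub_mem _ (hWHz _ _ (hWHy _ _ (isWeightedHomogeneous_X ℂ a i)))
          (isWeightedHomogeneous_X ℂ a i)
      exact hmem
    have := S4.piece_zero hfh (hd i) h2 h1
    exact sub_eq_zero.mp this
  have hΨΦ : Ψ₀.comp Φ₀ = AlgHom.id ℂ _ := by
    apply MvPolynomial.algHom_ext
    intro i
    simp only [AlgHom.comp_apply, AlgHom.id_apply]
    have h1 : Ψ₀ (Φ₀ (X i)) - X i ∈ Ideal.span {f'} := by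
      rw [← Ideal.Quotient.eq]
      rw [hcomm (Φ₀ (X i)), hcomm' (X i)]
      simp
    have h2 : IsWeightedHomogeneous a' (Ψ₀ (Φ₀ (X i)) - X i) (a' i) := by
      have hmem : Ψ₀ (Φ₀ (X i)) - X i ∈ weightedHomogeneousSubmodule ℂ a' (a' i) :=
        Submodule.sub_mem _ (hWHy _ _ (hWHz _ _ (isWeightedHomogeneous_X ℂ a' i)))
          (isWeightedHomogeneous_X ℂ a' i)
      exact hmem
    have := S4.piece_zero hfh' (hd' i) h2 h1
    exact sub_eq_zero.mp this
  set Ψ : MvPolynomial (Fin (n + 2)) ℂ ≃ₐ[ℂ] MvPolynomial (Fin (n + 2)) ℂ :=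
    AlgEquiv.ofAlgHom Ψ₀ Φ₀ hΨΦ hΦΨ with hΨdef
  have hgr : ∀ m, (weightedHomogeneousSubmodule ℂ a m).map Ψ.toLinearMap
      = weightedHomogeneousSubmodule ℂ a' m := by
    intro m
    apply le_antisymm
    · rintro _ ⟨p, hp, rfl⟩
      exact hWHy m p hp
    · intro q hq
      refine ⟨Φ₀ q, hWHz m q hq, ?_⟩
      have := DFunLike.congr_fun hΨΦ q
      exact (by simpa using this : Ψ₀ (Φ₀ q) = q)
  have hquot : ∀ s, ψ (Ideal.Quotient.mk (Ideal.span {f}) s)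
      = Ideal.Quotient.mk (Ideal.span {f'}) (Ψ s) := fun s => (hcomm s).symm
  -- degrees are equal
  have hfI : f ∈ Ideal.span {f} := Ideal.subset_span rfl
  have hf'I : f' ∈ Ideal.span {f'} := Ideal.subset_span rfl
  have hΨfI : Ψ₀ f ∈ Ideal.span {f'} := by
    rw [← Ideal.Quotient.eq_zero_iff_mem, hcomm f,
      Ideal.Quotient.eq_zero_iff_mem.mpr hfI, map_zero]
  have hΨf0 : Ψ₀ f ≠ 0 := by
    intro h0
    apply hf0
    have h := DFunLike.congr_fun hΦΨ f
    simp only [AlgHom.comp_apply, AlgHom.id_apply] at h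
    rw [h0, map_zero] at h
    exact h.symm
  have hΦf'I : Φ₀ f' ∈ Ideal.span {f} := by
    rw [← Ideal.Quotient.eq_zero_iff_mem, hcomm' f',
      Ideal.Quotient.eq_zero_iff_mem.mpr hf'I, map_zero]
  have hΦf'0 : Φ₀ f' ≠ 0 := by
    intro h0
    apply hf0'
    have h := DFunLike.congr_fun hΨΦ f'
    simp only [AlgHom.comp_apply, AlgHom.id_apply] at h
    rw [h0, map_zero] at h
    exact h.symm
  have h1 := S4.span_homog hfh' (hWHy d f hfh) hΨfI hΨf0
  have h2 := S4.span_homog hfh (hWHz d' f' hfh') hΦf'I hΦf'0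
  have hdd : d = d' := le_antisymm h2.1 h1.1
  -- the scalar
  obtain ⟨g, hgWH, hgf⟩ := h1.2
  have hdd0 : d - d' = 0 := by omega
  rw [hdd0] at hgWH
  have hgC : g = C (coeff 0 g) := S4.WH_zero_isC ha' hgWH
  have hc0 : coeff 0 g ≠ 0 := by
    intro h0
    rw [hgC, h0, map_zero, zero_mul] at hgf
    exact hΨf0 hgf
  -- the multiset of weights
  have hcount : ∀ b : ℕ, Fintype.card {i // a i = b} = Fintype.card {i // a' i = b} := by
    intro b
    rcases Nat.eq_zero_or_pos b with rfl | hb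
    · rw [Fintype.card_eq_zero_iff.mpr ⟨fun i => (ha i.1).ne' i.2⟩,
        Fintype.card_eq_zero_iff.mpr ⟨fun i => (ha' i.1).ne' i.2⟩]
    · exact S4.count_eq a a' ha ha' Ψ hgr b hb
  have hms : Finset.univ.val.map a = Finset.univ.val.map a' := by
    refine Multiset.ext.mpr fun b => ?_
    rw [Multiset.count_map, Multiset.count_map]
    have key : ∀ w : Fin (n + 2) → ℕ,
        (Multiset.filter (fun i => b = w i) Finset.univ.val).card
          = Fintype.card {i // w i = b} := by
      intro w
      rw [Fintype.card_subtype]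
      have : (Finset.univ.filter fun i => w i = b).card
          = (Finset.univ.filter fun i => b = w i).card := by
        congr 1
        ext i
        simp [eq_comm]
      rw [this]
      rfl
    rw [key a, key a', hcount b]
  refine ⟨hms, hdd, Ψ, hgr, ⟨Units.mk0 _ hc0, ?_⟩, hquot⟩
  show Ψ₀ f = (coeff 0 g) • f'
  rw [hgf, smul_eq_C_mul, ← hgC]

end
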